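/- Let {η_k}_{k=1}^K be a martingale difference sequence adapted to a filtration {F_k} with |η_k| ≤ M and E[η_k | F_k] = 0, and suppose Var[η_k | F_k] ≤ v_k. Then for any a > 0 and v > 0, P(Σ_{k=1}^K η_k ≥ a and Σ_{k=1}^K Var[η_k|F_k] ≤ v) ≤ exp(−a² / (2v + 2aM/3)). -/

import Mathlib

open MeasureTheory Finset

section FreedmanAux
open Nat

lemma factorial_ge (n : ℕ) : (2 * 3 ^ n : ℝ) ≤ (n + 2).factorial := by
  induction n with
  | zero => norm_num
  | succ k ih =>
    have hf : ((k + 1) + 2).factorial = (k + 3) * (k + 2).factorial :=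
      Nat.factorial_succ (k + 2)
    have h2 : (0:ℝ) < (k + 2).factorial := by positivity
    calc (2 * 3 ^ (k+1) : ℝ) = 3 * (2 * 3 ^ k) := by ring
    _ ≤ 3 * (k + 2).factorial := by nlinarith
    _ ≤ ((k + 3) : ℝ) * (k + 2).factorial := by nlinarith
    _ = (((k + 1) + 2).factorial : ℝ) := by rw [hf]; push_cast; ring

set_option maxHeartbeats 1000000 in
lemma expBound {c u : ℝ} (hc0 : 0 < c) (hc : c < 3) (hu : |u| ≤ c) :
    Real.exp u ≤ 1 + u + u ^ 2 / (2 * (1 - c / 3)) := by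
  have hsum : Summable (fun n : ℕ ↦ u ^ n / n.factorial) := Real.summable_pow_div_factorial u
  have hexp : Real.exp u = ∑' n : ℕ, u ^ n / n.factorial := by
    rw [Real.exp_eq_exp_ℝ, NormedSpace.exp_eq_tsum_div]
  have hsplit : Real.exp u = 1 + u + ∑' n : ℕ, u ^ (n + 2) / (n + 2).factorial := by
    rw [hexp, ← Summable.sum_add_tsum_nat_add 2 hsum]
    simp [Finset.sum_range_succ]
  have hr0 : (0:ℝ) ≤ c / 3 := by positivity
  have hr1 : c / 3 < 1 := by linarith
  have hterm : ∀ n : ℕ, u ^ (n + 2) / (n + 2).factorial ≤ u ^ 2 / 2 * (c / 3) ^ n := by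
    intro n
    have hp : (0:ℝ) < (n + 2).factorial := by positivity
    have h1 : u ^ (n + 2) / ((n + 2).factorial : ℝ) ≤ |u| ^ (n + 2) / (n + 2).factorial :=
      (div_le_div_iff_of_pos_right hp).mpr (by rw [← abs_pow]; exact le_abs_self _)
    refine h1.trans ?_
    have h2 : |u| ^ (n + 2) = u ^ 2 * |u| ^ n := by
      rw [pow_add, sq_abs]; ring
    rw [h2, div_le_iff₀ (by positivity)]
    have h3 : |u| ^ n ≤ c ^ n := pow_le_pow_left₀ (abs_nonneg u) hu n
    have h4 := factorial_ge n
    have h5 : (0:ℝ) < 3 ^ n := by positivity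
    calc u ^ 2 * |u| ^ n ≤ u ^ 2 / 2 * (c / 3) ^ n * (2 * 3 ^ n) := by
          rw [div_pow]
          have h33 : ((3:ℝ)^n) ≠ 0 := ne_of_gt h5
          field_simp
          nlinarith [sq_nonneg u, pow_nonneg (abs_nonneg u) n, pow_nonneg hc0.le n]
    _ ≤ u ^ 2 / 2 * (c / 3) ^ n * ((n + 2).factorial : ℝ) := by
          have : (0:ℝ) ≤ u ^ 2 / 2 * (c / 3) ^ n := by positivity
          nlinarith
  have hgeo : Summable (fun n : ℕ ↦ u ^ 2 / 2 * (c / 3) ^ n) :=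
    (summable_geometric_of_lt_one hr0 hr1).mul_left _
  have htail : Summable (fun n : ℕ ↦ u ^ (n + 2) / ((n + 2).factorial : ℝ)) :=
    (summable_nat_add_iff 2).2 hsum
  have hle : ∑' n : ℕ, u ^ (n + 2) / ((n + 2).factorial : ℝ)
      ≤ ∑' n : ℕ, u ^ 2 / 2 * (c / 3) ^ n :=
    Summable.tsum_le_tsum hterm htail hgeo
  rw [tsum_mul_left, tsum_geometric_of_lt_one hr0 hr1] at hle
  have heq : u ^ 2 / 2 * (1 - c / 3)⁻¹ = u ^ 2 / (2 * (1 - c / 3)) := by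
    rw [← div_eq_mul_inv, div_div]
  rw [hsplit]
  linarith [hle, heq.le]

lemma exp_neg_mul_le (x : ℝ) : Real.exp (-x) * (1 + x) ≤ 1 := by
  rcases le_or_gt (1 + x) 0 with h | h
  · exact (mul_nonpos_of_nonneg_of_nonpos (Real.exp_nonneg _) h).trans zero_le_one
  · have h1 : 1 + x ≤ Real.exp x := by linarith [Real.add_one_le_exp x]
    calc Real.exp (-x) * (1 + x) ≤ Real.exp (-x) * Real.exp x := by
          exact mul_le_mul_of_nonneg_left h1 (Real.exp_nonneg _)
    _ = 1 := by rw [← Real.exp_add]; norm_num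

end FreedmanAux

/-- Freedman's inequality: if `{η_k}` is a martingale difference sequence with
`|η_k| ≤ M` and zero conditional mean, then for any `a, v > 0`,
`P(∑_{k<K} η_k ≥ a and ∑_{k<K} Var[η_k | F_k] ≤ v) ≤ exp(−a²/(2v + 2aM/3))`. -/
theorem stmt15 {Ω : Type*} {m0 : MeasurableSpace Ω} (μ : Measure Ω) [IsProbabilityMeasure μ]
    (ℱ : Filtration ℕ m0) (η : ℕ → Ω → ℝ) (K : ℕ) (M : ℝ) (hM : 0 < M)
    (hadapt : ∀ k, StronglyMeasurable[ℱ (k + 1)] (η k))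
    (hbound : ∀ k, ∀ᵐ ω ∂μ, |η k ω| ≤ M)
    (hmean : ∀ k, μ[η k | ℱ k] =ᵐ[μ] 0)
    (a v : ℝ) (ha : 0 < a) (hv : 0 < v) :
    μ {ω | a ≤ ∑ k ∈ Finset.range K, η k ω ∧
        ∑ k ∈ Finset.range K, (μ[fun ω' => (η k ω') ^ 2 | ℱ k]) ω ≤ v} ≤
      ENNReal.ofReal (Real.exp (-a ^ 2 / (2 * v + 2 * a * M / 3))) := by
  set l : ℝ := a / (v + a * M / 3) with hl_def
  have hden : 0 < v + a * M / 3 := by positivity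
  have hl : 0 < l := by positivity
  set c : ℝ := l * M with hc_def
  have hc0 : 0 < c := by positivity
  have hc3 : c < 3 := by
    rw [hc_def, hl_def, div_mul_eq_mul_div, div_lt_iff₀ hden]
    nlinarith
  have h1c : 0 < 1 - c / 3 := by linarith
  set g : ℝ := l ^ 2 / (2 * (1 - c / 3)) with hg_def
  have hg : 0 < g := by positivity
  -- basic measurability / integrability
  have hηm : ∀ k, StronglyMeasurable[m0] (η k) := fun k => (hadapt k).mono (ℱ.le _)
  have bddInt : ∀ (f : Ω → ℝ) (C : ℝ), AEStronglyMeasurable f μ →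
      (∀ᵐ ω ∂μ, ‖f ω‖ ≤ C) → Integrable f μ :=
    fun f C hm hb => (integrable_const C).mono' hm hb
  have hηint : ∀ k, Integrable (η k) μ := fun k =>
    bddInt _ M (hηm k).aestronglyMeasurable ((hbound k).mono fun ω h => by
      simpa [Real.norm_eq_abs] using h)
  have hη2int : ∀ k, Integrable (fun ω => (η k ω) ^ 2) μ := fun k =>
    bddInt _ (M ^ 2) ((hηm k).pow 2).aestronglyMeasurable ((hbound k).mono fun ω h => by
      rw [Real.norm_eq_abs, abs_pow]
      exact pow_le_pow_left₀ (abs_nonneg _) h 2)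
  set W : ℕ → Ω → ℝ := fun k => μ[fun ω' => (η k ω') ^ 2 | ℱ k] with hW_def
  have hW_meas : ∀ k, StronglyMeasurable[ℱ k] (W k) := fun k => stronglyMeasurable_condExp
  have hW_nonneg : ∀ k, ∀ᵐ ω ∂μ, 0 ≤ W k ω := fun k =>
    condExp_nonneg (ae_of_all _ fun ω => sq_nonneg _)
  set S : ℕ → Ω → ℝ := fun n ω => ∑ k ∈ Finset.range n, η k ω with hS_def
  set V : ℕ → Ω → ℝ := fun n ω => ∑ k ∈ Finset.range n, W k ω with hV_def
  have hS_meas : ∀ n, StronglyMeasurable[ℱ n] (S n) := by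
    intro n
    apply Finset.stronglyMeasurable_fun_sum
    intro k hk
    exact (hadapt k).mono (ℱ.mono (Finset.mem_range.mp hk))
  have hV_meas : ∀ n, StronglyMeasurable[ℱ n] (V n) := by
    intro n
    apply Finset.stronglyMeasurable_fun_sum
    intro k hk
    exact (hW_meas k).mono (ℱ.mono (Finset.mem_range.mp hk).le)
  set G : ℕ → Ω → ℝ := fun n ω => Real.exp (l * S n ω - g * V n ω) with hG_def
  have hG_meas : ∀ n, StronglyMeasurable[ℱ n] (G n) := fun n =>
    Real.continuous_exp.comp_stronglyMeasurable
      (((hS_meas n).const_mul l).sub ((hV_meas n).const_mul g))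
  have hG_pos : ∀ n ω, 0 < G n ω := fun n ω => Real.exp_pos _
  have hG_int : ∀ n, Integrable (G n) μ := by
    intro n
    apply bddInt _ (Real.exp (l * (n * M)))
    · exact ((hG_meas n).mono (ℱ.le n)).aestronglyMeasurable
    · have hae : ∀ᵐ ω ∂μ, (∀ k, |η k ω| ≤ M) ∧ (∀ k, 0 ≤ W k ω) :=
        (ae_all_iff.mpr hbound).and (ae_all_iff.mpr hW_nonneg)
      filter_upwards [hae] with ω ⟨h1, h2⟩
      rw [Real.norm_eq_abs, abs_of_pos (hG_pos n ω), Real.exp_le_exp]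
      have hSb : S n ω ≤ n * M := by
        calc S n ω ≤ ∑ k ∈ Finset.range n, M :=
              Finset.sum_le_sum fun k _ => (abs_le.mp (h1 k)).2
        _ = n * M := by simp [mul_comm]
      have hVb : 0 ≤ V n ω := Finset.sum_nonneg fun k _ => h2 k
      nlinarith
  -- key induction : ∫ G n ≤ 1
  have key : ∀ n, ∫ ω, G n ω ∂μ ≤ 1 := by
    intro n
    induction n with
    | zero =>
      simp only [hG_def, hS_def, hV_def, Finset.range_zero, Finset.sum_empty, mul_zero,
        sub_zero, Real.exp_zero]
      simp
    | succ n ih =>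
      refine le_trans ?_ ih
      set f : Ω → ℝ := fun ω => G n ω * Real.exp (-(g * W n ω)) with hf_def
      set h : Ω → ℝ := fun ω => Real.exp (l * η n ω) with hh_def
      have hfh : G (n + 1) = f * h := by
        funext ω
        simp only [hG_def, hS_def, hV_def, hf_def, hh_def, Pi.mul_apply,
          Finset.sum_range_succ]
        rw [← Real.exp_add, ← Real.exp_add]
        ring_nf
      have hf_meas : StronglyMeasurable[ℱ n] f :=
        (hG_meas n).mul (Real.continuous_exp.comp_stronglyMeasurable
          ((hW_meas n).const_mul g).neg)
      have hh_int : Integrable h μ := by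
        apply bddInt _ (Real.exp (l * M))
        · exact (Real.continuous_exp.comp_stronglyMeasurable
            ((hηm n).const_mul l)).aestronglyMeasurable
        · filter_upwards [hbound n] with ω hω
          rw [Real.norm_eq_abs, hh_def, abs_of_pos (Real.exp_pos _), Real.exp_le_exp]
          nlinarith [(abs_le.mp hω).2]
      have hfh_int : Integrable (f * h) μ := hfh ▸ hG_int (n + 1)
      have hpull : μ[f * h | ℱ n] =ᵐ[μ] f * μ[h | ℱ n] :=
        condExp_mul_of_stronglyMeasurable_left hf_meas hfh_int hh_int
      -- conditional mgf bound
      set R : Ω → ℝ := fun ω => 1 + l * η n ω + g * (η n ω) ^ 2 with hR_def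
      have hR_int : Integrable R μ :=
        ((integrable_const (1:ℝ)).add ((hηint n).const_mul l)).add
          ((hη2int n).const_mul g)
      have hpt : ∀ᵐ ω ∂μ, h ω ≤ R ω := by
        filter_upwards [hbound n] with ω hω
        have hu : |l * η n ω| ≤ c := by
          rw [hc_def, abs_mul, abs_of_pos hl]
          exact mul_le_mul_of_nonneg_left hω hl.le
        have := expBound hc0 hc3 hu
        have heq : (l * η n ω) ^ 2 / (2 * (1 - c / 3)) = g * (η n ω) ^ 2 := by
          rw [hg_def]; field_simp
        rw [hh_def]
        simp only [hR_def]
        linarith [this, heq.le]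
      have hcond1 : μ[h | ℱ n] ≤ᵐ[μ] μ[R | ℱ n] := condExp_mono hh_int hR_int hpt
      have hcondR : μ[R | ℱ n] =ᵐ[μ] fun ω => 1 + g * W n ω := by
        have e1 : μ[R | ℱ n] =ᵐ[μ]
            μ[fun ω => 1 + l * η n ω | ℱ n] + μ[fun ω => g * (η n ω) ^ 2 | ℱ n] :=
          condExp_add ((integrable_const (1:ℝ)).add ((hηint n).const_mul l))
            ((hη2int n).const_mul g) _
        have e2 : μ[fun ω => 1 + l * η n ω | ℱ n] =ᵐ[μ]
            μ[fun _ => (1:ℝ) | ℱ n] + μ[fun ω => l * η n ω | ℱ n] :=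
          condExp_add (integrable_const 1) ((hηint n).const_mul l) _
        have e3 : μ[fun _ => (1:ℝ) | ℱ n] = fun _ => (1:ℝ) := condExp_const (ℱ.le n) 1
        have e4 : μ[fun ω => l * η n ω | ℱ n] =ᵐ[μ] fun _ => 0 := by
          have := condExp_smul (μ := μ) (m := ℱ n) l (η n)
          refine this.trans ?_
          filter_upwards [hmean n] with ω hω
          simp only [Pi.smul_apply, smul_eq_mul]
          rw [show (μ[η n | ℱ n]) ω = (0 : Ω → ℝ) ω from hω]
          simp
        have e5 : μ[fun ω => g * (η n ω) ^ 2 | ℱ n] =ᵐ[μ] fun ω => g * W n ω := by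
          have := condExp_smul (μ := μ) (m := ℱ n) g (fun ω => (η n ω) ^ 2)
          refine this.trans ?_
          exact Filter.Eventually.of_forall fun ω => by simp [hW_def]
        filter_upwards [e1, e2, e4, e5] with ω h1 h2 h4 h5
        simp only [Pi.add_apply] at h1 h2
        rw [h1, h2, e3, h4, h5]
        simp
      -- combine
      have hmain : μ[G (n + 1) | ℱ n] ≤ᵐ[μ] G n := by
        rw [hfh]
        filter_upwards [hpull, hcond1, hcondR, hW_nonneg n] with ω h1 h2 h3 h4
        rw [h1]
        simp only [Pi.mul_apply]
        have hf_nonneg : 0 ≤ f ω := by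
          simp only [hf_def]
          positivity
        have hle : (μ[h | ℱ n]) ω ≤ 1 + g * W n ω := h3 ▸ h2
        calc f ω * (μ[h | ℱ n]) ω ≤ f ω * (1 + g * W n ω) :=
              mul_le_mul_of_nonneg_left hle hf_nonneg
        _ = G n ω * (Real.exp (-(g * W n ω)) * (1 + g * W n ω)) := by
              simp only [hf_def]; ring
        _ ≤ G n ω * 1 :=
              mul_le_mul_of_nonneg_left (exp_neg_mul_le _) (hG_pos n ω).le
        _ = G n ω := mul_one _
      calc ∫ ω, G (n + 1) ω ∂μ = ∫ ω, (μ[G (n + 1) | ℱ n]) ω ∂μ :=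
            (integral_condExp (ℱ.le n)).symm
      _ ≤ ∫ ω, G n ω ∂μ := integral_mono_ae integrable_condExp (hG_int n) hmain
  -- conclude
  set A : Set Ω := {ω | a ≤ S K ω ∧ V K ω ≤ v} with hA_def
  have hA_meas : MeasurableSet A := by
    have h1 := ((hS_meas K).mono (ℱ.le K)).measurable
    have h2 := ((hV_meas K).mono (ℱ.le K)).measurable
    exact (measurableSet_le measurable_const h1).inter
      (measurableSet_le h2 measurable_const)
  have hβ : (0:ℝ) < Real.exp (l * a - g * v) := Real.exp_pos _
  have hGA : ∀ ω ∈ A, Real.exp (l * a - g * v) ≤ G K ω := by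
    intro ω hω
    obtain ⟨h1, h2⟩ := hω
    rw [hG_def, Real.exp_le_exp]
    have := mul_le_mul_of_nonneg_left h1 hl.le
    have := mul_le_mul_of_nonneg_left h2 hg.le
    linarith
  have hμA : Real.exp (l * a - g * v) * (μ A).toReal ≤ 1 := by
    calc Real.exp (l * a - g * v) * (μ A).toReal ≤ ∫ ω in A, G K ω ∂μ :=
          by have hsi := setIntegral_ge_of_const_le hA_meas (measure_ne_top μ A) hGA
                ((hG_int K).integrableOn)
             rw [smul_eq_mul, measureReal_def, mul_comm] at hsi
             exact hsi
    _ ≤ ∫ ω, G K ω ∂μ :=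
          setIntegral_le_integral (hG_int K) (ae_of_all _ fun ω => (hG_pos K ω).le)
    _ ≤ 1 := key K
  have hfinal : (μ A).toReal ≤ Real.exp (g * v - l * a) := by
    rw [Real.exp_sub]
    rw [mul_comm] at hμA
    have := (le_div_iff₀ hβ).mpr hμA
    calc (μ A).toReal ≤ 1 / Real.exp (l * a - g * v) := this
    _ = Real.exp (g * v) / Real.exp (l * a) := by
          rw [Real.exp_sub, one_div_div]
  have hexp_eq : g * v - l * a = -a ^ 2 / (2 * v + 2 * a * M / 3) := by
    have h1 : (1:ℝ) - c / 3 = v / (v + a * M / 3) := by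
      rw [hc_def, hl_def]; field_simp; ring
    rw [hg_def, h1, hl_def]
    have h2 : (2:ℝ) * v + 2 * a * M / 3 ≠ 0 := by positivity
    field_simp
    ring
  have : μ A = ENNReal.ofReal ((μ A).toReal) := (ENNReal.ofReal_toReal (measure_ne_top μ A)).symm
  calc μ A = ENNReal.ofReal ((μ A).toReal) := this
  _ ≤ ENNReal.ofReal (Real.exp (-a ^ 2 / (2 * v + 2 * a * M / 3))) := by
      apply ENNReal.ofReal_le_ofReal
      rwa [← hexp_eq]
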